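/- Let $X$ be a Banach space such that every element of $X^{**}$ is the weak*-limit of a sequence from $X$ (i.e., $X$ is weak*-sequentially dense in $X^{**}$). Then $X$ contains no isomorphic copy of $\ell_1$. -/

import Mathlib

open Filter Topology

open Set
open scoped ENNReal

lemma baire_osc {K : Type*} [TopologicalSpace K] [BaireSpace K] [Nonempty K]
    (f : K → ℝ) (F : ℕ → K → ℝ) (hcont : ∀ n, Continuous (F n))
    (hlim : ∀ x, Tendsto (fun n => F n x) atTop (𝓝 (f x))) :
    ∃ O : Set K, IsOpen O ∧ O.Nonempty ∧ ∀ x ∈ O, ∀ y ∈ O, |f x - f y| ≤ 1 / 2 := by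
  set C : ℕ → Set K := fun n => ⋂ (m) (_ : n ≤ m), {x | |F m x - F n x| ≤ 1/8} with hC
  have hCclosed : ∀ n, IsClosed (C n) := fun n =>
    isClosed_iInter fun m => isClosed_iInter fun _ =>
      isClosed_le (Continuous.abs ((hcont m).sub (hcont n))) continuous_const
  have hCcover : (⋃ n, C n) = univ := by
    ext x
    simp only [mem_iUnion, mem_univ, iff_true, hC, mem_iInter, mem_setOf_eq]
    obtain ⟨n, hn⟩ := (Metric.tendsto_atTop.mp (hlim x)) (1/16) (by norm_num)
    refine ⟨n, fun m hm => ?_⟩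
    have h1 := hn m hm
    have h2 := hn n le_rfl
    rw [Real.dist_eq] at h1 h2
    calc |F m x - F n x| ≤ |F m x - f x| + |f x - F n x| := abs_sub_le _ _ _
      _ ≤ 1/16 + 1/16 := by
          rw [abs_sub_comm (f x) (F n x)]
          exact add_le_add h1.le h2.le
      _ ≤ 1/8 := by norm_num
  obtain ⟨n₀, hn₀⟩ := nonempty_interior_of_iUnion_of_closed hCclosed hCcover
  obtain ⟨x₀, hx₀⟩ := hn₀
  have key : ∀ x ∈ C n₀, |f x - F n₀ x| ≤ 1/8 := by
    intro x hx
    simp only [hC, mem_iInter, mem_setOf_eq] at hx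
    have ht : Tendsto (fun m => |F m x - F n₀ x|) atTop (𝓝 |f x - F n₀ x|) :=
      ((hlim x).sub tendsto_const_nhds).abs
    refine le_of_tendsto ht ?_
    filter_upwards [eventually_ge_atTop n₀] with m hm using hx m hm
  refine ⟨interior (C n₀) ∩ (F n₀) ⁻¹' Metric.ball (F n₀ x₀) (1/8),
    isOpen_interior.inter (Metric.isOpen_ball.preimage (hcont n₀)),
    ⟨x₀, hx₀, by simp [Metric.mem_ball]⟩, ?_⟩
  rintro x ⟨hx1, hx2⟩ y ⟨hy1, hy2⟩
  have h1 := key x (interior_subset hx1)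
  have h2 := key y (interior_subset hy1)
  simp only [mem_preimage, Metric.mem_ball, Real.dist_eq] at hx2 hy2
  have t1 : |f x - f y| ≤ |f x - F n₀ x| + |F n₀ x - f y| := abs_sub_le _ _ _
  have t2 : |F n₀ x - f y| ≤ |F n₀ x - F n₀ y| + |F n₀ y - f y| := abs_sub_le _ _ _
  have t3 : |F n₀ x - F n₀ y| ≤ |F n₀ x - F n₀ x₀| + |F n₀ x₀ - F n₀ y| := abs_sub_le _ _ _
  have t4 : |F n₀ x₀ - F n₀ y| = |F n₀ y - F n₀ x₀| := abs_sub_comm _ _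
  have t5 : |F n₀ y - f y| = |f y - F n₀ y| := abs_sub_comm _ _
  rw [t4] at t3; rw [t5] at t2
  linarith


section lift
variable {X : Type*} [NormedAddCommGroup X] [NormedSpace ℝ X]

lemma summable_norm_lp1 (v : lp (fun _ : ℕ => ℝ) 1) : Summable fun k => ‖v k‖ := by
  have := lp.memℓp v
  rw [memℓp_gen_iff (by norm_num : 0 < (1:ℝ≥0∞).toReal)] at this
  simpa using this

lemma norm_lp1 (v : lp (fun _ : ℕ => ℝ) 1) : ‖v‖ = ∑' k, ‖v k‖ := by
  rw [lp.norm_eq_tsum_rpow (by norm_num) v]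
  simp

lemma exists_lift (T : (lp (fun _ : ℕ => ℝ) 1) →L[ℝ] X) {c : ℝ} (hc : 0 < c)
    (hT : ∀ v, c * ‖v‖ ≤ ‖T v‖) (A : Set ℕ) :
    ∃ g : X →L[ℝ] ℝ, ‖g‖ ≤ 1/c ∧
      ∀ k, g (T (lp.single 1 k 1)) = A.indicator (fun _ => (1:ℝ)) k := by
  have hsA : ∀ v : lp (fun _ : ℕ => ℝ) 1, Summable (A.indicator (⇑v)) := fun v =>
    Summable.of_norm_bounded (summable_norm_lp1 v) fun k => norm_indicator_le_norm_self _ _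
  let ℓA : lp (fun _ : ℕ => ℝ) 1 →ₗ[ℝ] ℝ :=
    { toFun := fun v => ∑' k, A.indicator (⇑v) k
      map_add' := by
        intro v w
        show (∑' (k:ℕ), A.indicator (⇑(v + w)) k)
            = (∑' (k:ℕ), A.indicator (⇑v) k) + ∑' (k:ℕ), A.indicator (⇑w) k
        have h : ∀ k, A.indicator (⇑(v + w)) k = A.indicator (⇑v) k + A.indicator (⇑w) k := by
          intro k
          by_cases h : k ∈ A
          · rw [Set.indicator_of_mem h, Set.indicator_of_mem h, Set.indicator_of_mem h]; rfl
          · rw [Set.indicator_of_notMem h, Set.indicator_of_notMem h, Set.indicator_of_notMem h]; simp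
        rw [tsum_congr h, Summable.tsum_add (hsA v) (hsA w)]
      map_smul' := by
        intro a v
        show (∑' (k:ℕ), A.indicator (⇑(a • v)) k) = (RingHom.id ℝ) a • ∑' (k:ℕ), A.indicator (⇑v) k
        have h : ∀ k, A.indicator (⇑(a • v)) k = a * A.indicator (⇑v) k := by
          intro k
          by_cases h : k ∈ A <;>
            simp [Set.indicator_of_mem, Set.indicator_of_notMem, h, lp.coeFn_smul]
        rw [tsum_congr h, tsum_mul_left]
        simp }
  have hbound : ∀ v, ‖ℓA v‖ ≤ ‖v‖ := by
    intro v
    have h1 : ‖∑' k, A.indicator (⇑v) k‖ ≤ ∑' k, ‖A.indicator (⇑v) k‖ :=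
      norm_tsum_le_tsum_norm ((summable_norm_lp1 v).of_nonneg_of_le (fun _ => norm_nonneg _)
        (fun k => norm_indicator_le_norm_self _ _))
    have h2 : ∑' k, ‖A.indicator (⇑v) k‖ ≤ ∑' k, ‖v k‖ :=
      Summable.tsum_le_tsum (fun k => norm_indicator_le_norm_self _ _)
        ((summable_norm_lp1 v).of_nonneg_of_le (fun _ => norm_nonneg _)
          (fun k => norm_indicator_le_norm_self _ _)) (summable_norm_lp1 v)
    rw [norm_lp1 v]
    exact h1.trans h2
  have Tinj : Function.Injective T := by
    intro a b hab
    have h := hT (a - b)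
    rw [map_sub, hab, sub_self, norm_zero] at h
    have h0 : ‖a - b‖ ≤ 0 := by nlinarith [norm_nonneg (a - b)]
    rw [← sub_eq_zero]
    exact norm_le_zero_iff.mp h0
  have Tinj' : Function.Injective (T : lp (fun _ : ℕ => ℝ) 1 →ₗ[ℝ] X) := Tinj
  let eqv := LinearEquiv.ofInjective (T : lp (fun _ : ℕ => ℝ) 1 →ₗ[ℝ] X) Tinj'
  let p : Subspace ℝ X := LinearMap.range (T : lp (fun _ : ℕ => ℝ) 1 →ₗ[ℝ] X)
  let fA : p →ₗ[ℝ] ℝ := ℓA.comp eqv.symm.toLinearMap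
  have hfA : ∀ y : p, ‖fA y‖ ≤ (1/c) * ‖y‖ := by
    intro y
    have hy : (y : X) = T (eqv.symm y) := by
      conv_lhs => rw [← eqv.apply_symm_apply y]
      rw [LinearEquiv.ofInjective_apply]
      rfl
    have h1 : ‖ℓA (eqv.symm y)‖ ≤ ‖eqv.symm y‖ := hbound _
    have h2 : c * ‖eqv.symm y‖ ≤ ‖T (eqv.symm y)‖ := hT _
    have h3 : ‖y‖ = ‖T (eqv.symm y)‖ := by rw [← hy]; rfl
    have h4 : ‖eqv.symm y‖ ≤ (1/c) * ‖T (eqv.symm y)‖ := by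
      rw [div_mul_eq_mul_div, one_mul, le_div_iff₀ hc, mul_comm]
      exact h2
    rw [h3]
    exact le_trans h1 h4
  let fAc := fA.mkContinuous (1/c) hfA
  obtain ⟨g, hg_ext, hg_norm⟩ := exists_extension_norm_eq p fAc
  refine ⟨g, ?_, ?_⟩
  · rw [hg_norm]
    exact fA.mkContinuous_norm_le (by positivity) hfA
  · intro k
    have hmem : T (lp.single 1 k 1) ∈ p := ⟨lp.single 1 k 1, rfl⟩
    have h1 : g (T (lp.single 1 k 1)) = fAc ⟨T (lp.single 1 k 1), hmem⟩ :=
      hg_ext ⟨T (lp.single 1 k 1), hmem⟩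
    have h2 : eqv.symm ⟨T (lp.single 1 k 1), hmem⟩ = lp.single 1 k 1 := by
      rw [LinearEquiv.symm_apply_eq]
      apply Subtype.ext
      rw [LinearEquiv.ofInjective_apply]
      rfl
    rw [h1]
    show ℓA (eqv.symm ⟨T (lp.single 1 k 1), hmem⟩) = _
    rw [h2]
    show (∑' j, A.indicator (⇑(lp.single 1 k (1:ℝ))) j) = A.indicator (fun _ => (1:ℝ)) k
    rw [tsum_eq_single k]
    · by_cases h : k ∈ A <;>
        simp [Set.indicator_of_mem, Set.indicator_of_notMem, h, lp.single_apply_self]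
    · intro j hj
      by_cases h : j ∈ A <;>
        simp [Set.indicator_of_mem, Set.indicator_of_notMem, h, lp.single_apply_ne _ _ _ hj, Pi.single_apply, hj]

end lift


/-- If every element of `X**` is the weak*-limit of a sequence from `X`, then `X`
contains no isomorphic copy of `ℓ₁`. -/
theorem stmt8 {X : Type*} [NormedAddCommGroup X] [NormedSpace ℝ X] [CompleteSpace X]
    (hdense : ∀ F : (X →L[ℝ] ℝ) →L[ℝ] ℝ, ∃ x : ℕ → X,
      ∀ g : X →L[ℝ] ℝ, Tendsto (fun n => g (x n)) atTop (𝓝 (F g))) :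
    ¬ ∃ T : (lp (fun _ : ℕ => ℝ) 1) →L[ℝ] X, ∃ c : ℝ, 0 < c ∧ ∀ v, c * ‖v‖ ≤ ‖T v‖ := by
  rintro ⟨T, c, hc, hT⟩
  classical
  set e : ℕ → lp (fun _ : ℕ => ℝ) 1 := fun k => lp.single 1 k 1 with he
  -- the nonprincipal ultrafilter
  let U : Ultrafilter ℕ := Ultrafilter.of atTop
  have hU : (U : Filter ℕ) ≤ atTop := Ultrafilter.of_le _
  have hUcof : ∀ s : Set ℕ, s.Finite → sᶜ ∈ (U : Filter ℕ) := fun s hs =>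
    hU (Nat.cofinite_eq_atTop ▸ hs.compl_mem_cofinite)
  have hek : ∀ k, ‖e k‖ = 1 := fun k => by
    simpa [he] using lp.norm_single (E := fun _ : ℕ => ℝ) (p := 1) (by norm_num) k (1:ℝ)
  have hbdd : ∀ g : X →L[ℝ] ℝ, ∀ k, ‖g (T (e k))‖ ≤ ‖g‖ * ‖T‖ := by
    intro g k
    calc ‖g (T (e k))‖ ≤ ‖g‖ * ‖T (e k)‖ := g.le_opNorm _
      _ ≤ ‖g‖ * (‖T‖ * ‖e k‖) := mul_le_mul_of_nonneg_left (T.le_opNorm _) (norm_nonneg g)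
      _ = ‖g‖ * ‖T‖ := by rw [hek k, mul_one]
  -- the ultrafilter-limit functional F ∈ X**
  have hexists : ∀ g : X →L[ℝ] ℝ, ∃ l, Tendsto (fun k => g (T (e k))) ↑U (𝓝 l) := by
    intro g
    have hmem : (↑(U.map fun k => g (T (e k))) : Filter ℝ) ≤
        𝓟 (Metric.closedBall 0 (‖g‖ * ‖T‖)) := by
      rw [le_principal_iff, Ultrafilter.coe_map, mem_map]
      refine mem_of_superset univ_mem fun k _ => ?_
      simp only [mem_preimage, Metric.mem_closedBall, dist_zero_right]
      exact hbdd g k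
    obtain ⟨l, -, hl⟩ := (isCompact_closedBall (0:ℝ) (‖g‖ * ‖T‖)).ultrafilter_le_nhds _ hmem
    exact ⟨l, by rwa [Ultrafilter.coe_map] at hl⟩
  choose L hL using hexists
  let Flin : (X →L[ℝ] ℝ) →ₗ[ℝ] ℝ :=
    { toFun := L
      map_add' := fun g h => tendsto_nhds_unique (hL (g + h))
        (by simpa using ((hL g).add (hL h)))
      map_smul' := fun a g => tendsto_nhds_unique (hL (a • g))
        (by simpa [smul_eq_mul] using ((hL g).const_mul a)) }
  have hFbound : ∀ g, ‖Flin g‖ ≤ ‖T‖ * ‖g‖ := by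
    intro g
    have habs : Tendsto (fun k => ‖g (T (e k))‖) ↑U (𝓝 ‖L g‖) := (hL g).norm
    have h2 := le_of_tendsto habs (Eventually.of_forall (hbdd g))
    show ‖L g‖ ≤ ‖T‖ * ‖g‖
    simpa [mul_comm] using h2
  let F : (X →L[ℝ] ℝ) →L[ℝ] ℝ := Flin.mkContinuous ‖T‖ hFbound
  have hF : ∀ g : X →L[ℝ] ℝ, Tendsto (fun k => g (T (e k))) ↑U (𝓝 (F g)) := hL
  obtain ⟨x, hx⟩ := hdense F
  -- the weak-* compact set K
  let χ : Set ℕ → ℕ → ℝ := fun A => A.indicator (fun _ => (1:ℝ))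
  let Kset : Set (WeakDual ℝ X) :=
    (WeakDual.toStrongDual ⁻¹' Metric.closedBall 0 (1/c)) ∩
      ⋂ k, (fun g : WeakDual ℝ X => g (T (e k))) ⁻¹' ({0,1} : Set ℝ)
  have hKclosed : IsClosed Kset :=
    (WeakDual.isClosed_closedBall 0 (1/c)).inter (isClosed_iInter fun k =>
      ((Set.toFinite ({0,1} : Set ℝ)).isClosed).preimage (WeakDual.eval_continuous _))
  have hKcompact : IsCompact Kset :=
    (WeakDual.isCompact_closedBall (0 : StrongDual ℝ X) (1/c)).of_isClosed_subset hKclosed inter_subset_left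
  let Surj : Set (WeakDual ℝ X) → Prop := fun Q =>
    ∀ A : Set ℕ, ∃ g ∈ Q, ∀ k, g (T (e k)) = χ A k
  let S : Set (Set (WeakDual ℝ X)) := {Q | Q ⊆ Kset ∧ IsClosed Q ∧ Surj Q}
  have hχmem : ∀ (A : Set ℕ) (k : ℕ), χ A k ∈ ({0,1} : Set ℝ) := by
    intro A k
    by_cases h : k ∈ A <;> simp [χ, Set.indicator_of_mem, Set.indicator_of_notMem, h]
  have hKS : Kset ∈ S := by
    refine ⟨subset_rfl, hKclosed, fun A => ?_⟩
    obtain ⟨g, hgn, hgv⟩ := exists_lift T hc hT A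
    refine ⟨StrongDual.toWeakDual g, ⟨?_, ?_⟩, fun k => hgv k⟩
    · exact (by simpa only [Metric.mem_closedBall, dist_zero_right] using hgn : g ∈ Metric.closedBall 0 (1/c))
    · rw [mem_iInter]
      intro k
      rw [mem_preimage]
      show g (T (e k)) ∈ ({0,1} : Set ℝ)
      rw [hgv k]
      exact hχmem A k
  -- Zorn's lemma : a minimal closed subset mapping onto {0,1}^ℕ
  have hvalclosed : ∀ A : Set ℕ, IsClosed {g : WeakDual ℝ X | ∀ k, g (T (e k)) = χ A k} := by
    intro A
    have : {g : WeakDual ℝ X | ∀ k, g (T (e k)) = χ A k} =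
        ⋂ k, (fun g : WeakDual ℝ X => g (T (e k))) ⁻¹' {χ A k} := by
      ext g; simp [mem_iInter]
    rw [this]
    exact isClosed_iInter fun k => isClosed_singleton.preimage (WeakDual.eval_continuous _)
  have hzorn : ∀ ch ⊆ S, IsChain (· ⊆ ·) ch → ch.Nonempty →
      ∃ lb ∈ S, ∀ s ∈ ch, lb ⊆ s := by
    intro ch hchS hchain hchne
    refine ⟨⋂₀ ch, ⟨?_, ?_, ?_⟩, fun s hs => sInter_subset_of_mem hs⟩
    · obtain ⟨t, ht⟩ := hchne
      exact (sInter_subset_of_mem ht).trans (hchS ht).1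
    · exact isClosed_sInter fun t ht => (hchS ht).2.1
    · intro A
      haveI : Nonempty ↥ch := hchne.to_subtype
      set V : ↥ch → Set (WeakDual ℝ X) :=
        fun t => ↑t ∩ {g : WeakDual ℝ X | ∀ k, g (T (e k)) = χ A k} with hV
      have hVne : ∀ t, (V t).Nonempty := by
        rintro ⟨t, ht⟩
        obtain ⟨g, hg1, hg2⟩ := (hchS ht).2.2 A
        exact ⟨g, hg1, hg2⟩
      have hVclosed : ∀ t, IsClosed (V t) := fun t =>
        ((hchS t.2).2.1).inter (hvalclosed A)
      have hVcompact : ∀ t, IsCompact (V t) := fun t =>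
        hKcompact.of_isClosed_subset (hVclosed t)
          (inter_subset_left.trans (hchS t.2).1)
      have hVdir : Directed (· ⊇ ·) V := by
        rintro ⟨t, ht⟩ ⟨s, hs⟩
        rcases eq_or_ne t s with rfl | hts
        · exact ⟨⟨t, ht⟩, subset_rfl, subset_rfl⟩
        rcases hchain ht hs hts with h | h
        · exact ⟨⟨t, ht⟩, subset_rfl, inter_subset_inter_left _ h⟩
        · exact ⟨⟨s, hs⟩, inter_subset_inter_left _ h, subset_rfl⟩
      obtain ⟨g, hg⟩ := IsCompact.nonempty_iInter_of_directed_nonempty_isCompact_isClosed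
        V hVdir hVne hVcompact hVclosed
      simp only [hV, mem_iInter, mem_inter_iff, mem_setOf_eq] at hg
      refine ⟨g, ?_, (hg ⟨_, hchne.choose_spec⟩).2⟩
      rw [mem_sInter]
      intro t ht
      exact (hg ⟨t, ht⟩).1
  obtain ⟨K₀, -, hK₀min⟩ := zorn_superset_nonempty S hzorn Kset hKS
  have hK₀S : K₀ ∈ S := hK₀min.prop
  have hK₀compact : IsCompact K₀ :=
    hKcompact.of_isClosed_subset hK₀S.2.1 hK₀S.1
  have hK₀ne : K₀.Nonempty := by
    obtain ⟨g, hg, -⟩ := hK₀S.2.2 ∅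
    exact ⟨g, hg⟩
  -- Baire category on K₀
  haveI : Nonempty ↥K₀ := hK₀ne.to_subtype
  haveI : CompactSpace ↥K₀ := isCompact_iff_compactSpace.mp hK₀compact
  obtain ⟨O, hOopen, hOne, hosc⟩ := baire_osc (K := ↥K₀)
      (fun g => F (WeakDual.toStrongDual g.1)) (fun n g => (g.1 : WeakDual ℝ X) (x n))
      (fun n => (WeakDual.eval_continuous (x n)).comp continuous_subtype_val)
      (fun g => hx (WeakDual.toStrongDual g.1))
  rw [isOpen_induced_iff] at hOopen
  obtain ⟨O', hO'open, hO'pre⟩ := hOopen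
  obtain ⟨g₀, hg₀O⟩ := hOne
  have hg₀O' : (g₀ : WeakDual ℝ X) ∈ O' := by
    rw [← hO'pre] at hg₀O
    exact hg₀O
  -- minimality gives a set A' not represented in K₀ \ O'
  have hproper : ¬ Surj (K₀ \ O') := by
    intro hs
    have hmem : (K₀ \ O') ∈ S :=
      ⟨diff_subset.trans hK₀S.1, hK₀S.2.1.sdiff hO'open, hs⟩
    have := hK₀min.2 hmem diff_subset
    have hg₀diff : (g₀ : WeakDual ℝ X) ∈ K₀ \ O' := this g₀.2
    exact hg₀diff.2 hg₀O'
  obtain ⟨A', hA'⟩ := not_forall.mp hproper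
  -- the image of K₀ \ O' misses χ A'
  let ρ : WeakDual ℝ X → ℕ → ℝ := fun g k => g (T (e k))
  have hρcont : Continuous ρ := continuous_pi fun k => WeakDual.eval_continuous _
  have hImgcompact : IsCompact (ρ '' (K₀ \ O')) :=
    (hK₀compact.of_isClosed_subset (hK₀S.2.1.sdiff hO'open) diff_subset).image hρcont
  have hImgclosed : IsClosed (ρ '' (K₀ \ O')) := hImgcompact.isClosed
  have hχnotin : χ A' ∉ ρ '' (K₀ \ O') := by
    rintro ⟨g, hg, hgeq⟩
    exact hA' ⟨g, hg, fun k => congrFun hgeq k⟩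
  have hWopen : IsOpen (ρ '' (K₀ \ O'))ᶜ := hImgclosed.isOpen_compl
  obtain ⟨I, u, hu, hsub⟩ := isOpen_pi_iff.mp hWopen (χ A') hχnotin
  -- two perturbed sets
  let A₁ : Set ℕ := (A' ∩ ↑I) ∪ (↑I : Set ℕ)ᶜ
  let A₂ : Set ℕ := A' ∩ ↑I
  have hagree : ∀ B : Set ℕ, B ∩ ↑I = A' ∩ ↑I → ∀ i ∈ I, χ B i = χ A' i := by
    intro B hB i hi
    have hiB : i ∈ B ↔ i ∈ A' := by
      constructor
      · intro h
        have : i ∈ B ∩ ↑I := ⟨h, hi⟩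
        rw [hB] at this
        exact this.1
      · intro h
        have : i ∈ A' ∩ ↑I := ⟨h, hi⟩
        rw [← hB] at this
        exact this.1
    by_cases h : i ∈ A'
    · simp only [χ]
      rw [Set.indicator_of_mem (hiB.mpr h), Set.indicator_of_mem h]
    · simp only [χ]
      rw [Set.indicator_of_notMem (fun hh => h (hiB.mp hh)), Set.indicator_of_notMem h]
  have hA₁I : A₁ ∩ ↑I = A' ∩ ↑I := by
    ext i
    simp only [A₁, mem_inter_iff, mem_union, mem_compl_iff]
    tauto
  have hA₂I : A₂ ∩ ↑I = A' ∩ ↑I := by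
    ext i
    simp only [A₂, mem_inter_iff]
    tauto
  have hmemW : ∀ B : Set ℕ, B ∩ ↑I = A' ∩ ↑I → χ B ∉ ρ '' (K₀ \ O') := by
    intro B hB hmem
    have : χ B ∈ (↑I : Set ℕ).pi u := by
      rw [Set.mem_pi]
      intro i hi
      rw [hagree B hB i hi]
      exact (hu i hi).2
    exact (hsub this) hmem
  -- pick the two witnesses in K₀, necessarily in O'
  have hwitness : ∀ B : Set ℕ, B ∩ ↑I = A' ∩ ↑I →
      ∃ g ∈ K₀, (g ∈ O') ∧ ∀ k, g (T (e k)) = χ B k := by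
    intro B hB
    obtain ⟨g, hgK₀, hgv⟩ := hK₀S.2.2 B
    have hρg : ρ g = χ B := funext hgv
    have : g ∉ K₀ \ O' := fun hdiff => hmemW B hB ⟨g, hdiff, hρg⟩
    refine ⟨g, hgK₀, ?_, hgv⟩
    by_contra hnot
    exact this ⟨hgK₀, hnot⟩
  obtain ⟨g₁, hg₁K, hg₁O, hg₁v⟩ := hwitness A₁ hA₁I
  obtain ⟨g₂, hg₂K, hg₂O, hg₂v⟩ := hwitness A₂ hA₂I
  -- compute F at the two witnesses
  have hFg₁ : F (WeakDual.toStrongDual g₁) = 1 := by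
    have h1 : Tendsto (fun k => (WeakDual.toStrongDual g₁) (T (e k))) ↑U (𝓝 (F _)) := hF _
    have h2 : Tendsto (fun k => (WeakDual.toStrongDual g₁) (T (e k))) ↑U (𝓝 1) := by
      have hA₁U : A₁ ∈ (U : Filter ℕ) := by
        refine mem_of_superset (hUcof ↑I I.finite_toSet) ?_
        intro i hi
        exact Or.inr hi
      refine Tendsto.congr' ?_ tendsto_const_nhds
      filter_upwards [hA₁U] with k hk
      have h3 : (WeakDual.toStrongDual g₁) (T (e k)) = χ A₁ k := hg₁v k
      rw [h3]
      simp only [χ]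
      rw [Set.indicator_of_mem hk]
    exact tendsto_nhds_unique h1 h2
  have hFg₂ : F (WeakDual.toStrongDual g₂) = 0 := by
    have h1 : Tendsto (fun k => (WeakDual.toStrongDual g₂) (T (e k))) ↑U (𝓝 (F _)) := hF _
    have h2 : Tendsto (fun k => (WeakDual.toStrongDual g₂) (T (e k))) ↑U (𝓝 0) := by
      have hA₂fin : A₂.Finite := (I.finite_toSet).inter_of_right A'
      have hA₂U : A₂ᶜ ∈ (U : Filter ℕ) := hUcof A₂ hA₂fin
      refine Tendsto.congr' ?_ tendsto_const_nhds
      filter_upwards [hA₂U] with k hk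
      have h3 : (WeakDual.toStrongDual g₂) (T (e k)) = χ A₂ k := hg₂v k
      rw [h3]
      simp only [χ]
      rw [Set.indicator_of_notMem hk]
    exact tendsto_nhds_unique h1 h2
  -- contradiction with the oscillation bound
  have hmem₁ : (⟨g₁, hg₁K⟩ : ↥K₀) ∈ O := by
    rw [← hO'pre]
    exact hg₁O
  have hmem₂ : (⟨g₂, hg₂K⟩ : ↥K₀) ∈ O := by
    rw [← hO'pre]
    exact hg₂O
  have := hosc _ hmem₁ _ hmem₂
  simp only [hFg₁, hFg₂] at this
  norm_num at this
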